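/- arXiv:1306.2622 — 2 statements merged into one kernel-verified Lean document; each statement's English description precedes it below -/
import Mathlib

section
/- Let G and H be finite groups, let X be a finite bifree (G,H)-biset, and let L = Δ(R,α,S) be a twisted diagonal subgroup of G×H. Then the number |X^L| of L-fixed points of X (viewed as a left (G×H)-set) is divisible by |C_G(R)| and by |C_H(S)|. -/
open MulAction

/-- An isomorphism of `M`-sets: an equivariant bijection. -/
def IsoAsGSets (M X Y : Type*) [SMul M X] [SMul M Y] : Prop :=
  ∃ e : X ≃ Y, ∀ (m : M) (x : X), e (m • x) = m • e x

/-- The twisted diagonal subgroup `Δ(R,α,S) = {(α s, s) | s ∈ S}` of `G × H`,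
for an isomorphism `α : S ≃* R`. -/
def twistedDiagonal {G H : Type*} [Group G] [Group H] (R : Subgroup G) (S : Subgroup H)
    (α : S ≃* R) : Subgroup (G × H) :=
  ((R.subtype.comp α.toMonoidHom).prod S.subtype).range

/-- `Δ(G,φ,H) = {(φ h, h) | h ∈ H} ≤ G × H` for an isomorphism `φ : H ≃* G`. -/
def fullTwistedDiagonal {G H : Type*} [Group G] [Group H] (φ : H ≃* G) : Subgroup (G × H) :=
  (φ.toMonoidHom.prod (MonoidHom.id H)).range

/-- The diagonal subgroup `Δ(R) = {(r,r) | r ∈ R} ≤ G × G`. -/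
def diagSubgroup {G : Type*} [Group G] (R : Subgroup G) : Subgroup (G × G) :=
  (R.subtype.prod R.subtype).range

/-- A `(G,H)`-biset (i.e. a left `(G × H)`-set) is bifree if it is free as a left `G`-set
and free as a right `H`-set. -/
def IsBifree (G H X : Type*) [Group G] [Group H] [MulAction (G × H) X] : Prop :=
  (∀ (g : G) (x : X), (g, (1 : H)) • x = x → g = 1) ∧
  (∀ (h : H) (x : X), ((1 : G), h) • x = x → h = 1)

section Tensor

variable (G H K : Type*) [Group G] [Group H] [Group K]
variable (X Y : Type*) [MulAction (G × H) X] [MulAction (H × K) Y]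

/-- The relation on `X × Y` identifying `(x·h, y)` with `(x, h·y)`. -/
def bisetSetoid : Setoid (X × Y) where
  r p q := ∃ h : H, q.1 = ((1 : G), h) • p.1 ∧ q.2 = (h, (1 : K)) • p.2
  iseqv := by
    constructor
    · intro p
      exact ⟨1, by simp [Prod.mk_one_one], by simp [Prod.mk_one_one]⟩
    · rintro p q ⟨h, h1, h2⟩
      exact ⟨h⁻¹, by simp [h1, smul_smul, Prod.mk_one_one], by simp [h2, smul_smul, Prod.mk_one_one]⟩
    · rintro p q r ⟨h, h1, h2⟩ ⟨h', h1', h2'⟩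
      exact ⟨h' * h, by simp [h1, h1', smul_smul], by simp [h2, h2', smul_smul]⟩

/-- The tensor product `X ×_H Y` of a `(G,H)`-biset and an `(H,K)`-biset;
a `(G,K)`-biset. -/
def BisetTensor : Type _ :=
  Quotient (bisetSetoid G H K X Y)

variable {G H K X Y}

/-- The class of `(x, y)` in `X ×_H Y`. -/
def BisetTensor.mk (p : X × Y) : BisetTensor G H K X Y :=
  Quotient.mk (bisetSetoid G H K X Y) p

variable (G H K X Y)

instance : SMul (G × K) (BisetTensor G H K X Y) :=
  ⟨fun a => Quotient.map (fun p => ((a.1, (1 : H)) • p.1, ((1 : H), a.2) • p.2))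
    (by
      rintro p q ⟨h, h1, h2⟩
      try dsimp only
      exact ⟨h, by simp [h1, smul_smul], by simp [h2, smul_smul]⟩)⟩

variable {G H K X Y}

theorem BisetTensor.smul_mk (a : G × K) (p : X × Y) :
    a • (BisetTensor.mk p : BisetTensor G H K X Y) =
      BisetTensor.mk ((a.1, (1 : H)) • p.1, ((1 : H), a.2) • p.2) :=
  rfl

variable (G H K X Y)

instance : MulAction (G × K) (BisetTensor G H K X Y) where
  one_smul q := Quotient.inductionOn q fun p => by
    refine Quotient.sound ⟨1, ?_, ?_⟩ <;> simp [Prod.mk_one_one]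
  mul_smul a b q := Quotient.inductionOn q fun p => by
    refine Quotient.sound ⟨1, ?_, ?_⟩ <;> simp [smul_smul, Prod.mk_one_one]

end Tensor

section Op

/-- The opposite biset: a `(G,H)`-biset viewed as an `(H,G)`-biset via
`h · x · g := g⁻¹ · x · h⁻¹`. -/
def BisetOp (H G X : Type*) : Type _ := (fun _ _ => X) H G

instance BisetOp.instMulAction {G H : Type*} [Group G] [Group H] (X : Type*)
    [MulAction (G × H) X] : MulAction (H × G) (BisetOp H G X) :=
  MulAction.compHom X (MulEquiv.prodComm : H × G ≃* G × H).toMonoidHom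

instance BisetOp.instFinite {G H : Type*} (X : Type*) [Finite X] : Finite (BisetOp H G X) :=
  inferInstanceAs (Finite X)

end Op

section Grp

/-- The group `G` viewed as a `(G,G)`-biset via left and right multiplication. -/
structure BisetGrp (G : Type*) where
  /-- the underlying group element -/
  val : G

instance BisetGrp.instSMul {G : Type*} [Group G] : SMul (G × G) (BisetGrp G) :=
  ⟨fun p x => ⟨p.1 * x.val * p.2⁻¹⟩⟩

theorem BisetGrp.smul_def {G : Type*} [Group G] (p : G × G) (x : BisetGrp G) :
    p • x = ⟨p.1 * x.val * p.2⁻¹⟩ := rfl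

instance BisetGrp.instMulAction {G : Type*} [Group G] : MulAction (G × G) (BisetGrp G) where
  one_smul x := by
    cases x
    simp [BisetGrp.smul_def]
  mul_smul p q x := by
    cases x
    simp [BisetGrp.smul_def, mul_assoc]

instance BisetGrp.instFinite {G : Type*} [Finite G] : Finite (BisetGrp G) :=
  Finite.of_equiv G ⟨fun g => ⟨g⟩, fun x => x.val, fun _ => rfl, fun _ => rfl⟩

end Grp

/-- A pair `(X,Y)` of `(G,H)`-bisets is an orthogonal pair if
`(X ×_H X°) ⊔ (Y ×_H Y°) ≅ G ⊔ (X ×_H Y°) ⊔ (Y ×_H X°)` as `(G,G)`-bisets;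
this encodes the equation `([X] - [Y]) ·_H ([X] - [Y])° = [G]` in `B^Δ(G,G)`. -/
def IsOrthogonalPair (G H : Type*) [Group G] [Group H] (X Y : Type*)
    [MulAction (G × H) X] [MulAction (G × H) Y] : Prop :=
  IsoAsGSets (G × G)
    (BisetTensor G H G X (BisetOp H G X) ⊕ BisetTensor G H G Y (BisetOp H G Y))
    (BisetGrp G ⊕ (BisetTensor G H G X (BisetOp H G Y) ⊕ BisetTensor G H G Y (BisetOp H G X)))

section Iota

/-- For a `G`-set `Z`, the `(G,G)`-biset `ι(Z) = G × Z` with action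
`(g₁,g₂) • (g,z) = (g₁ g g₂⁻¹, g₂ • z)`. -/
structure IotaBiset (G Z : Type*) where
  /-- the group component -/
  fst : G
  /-- the `G`-set component -/
  snd : Z

instance IotaBiset.instSMul {G Z : Type*} [Group G] [MulAction G Z] :
    SMul (G × G) (IotaBiset G Z) :=
  ⟨fun p x => ⟨p.1 * x.fst * p.2⁻¹, p.2 • x.snd⟩⟩

theorem IotaBiset.smul_def {G Z : Type*} [Group G] [MulAction G Z] (p : G × G)
    (x : IotaBiset G Z) : p • x = ⟨p.1 * x.fst * p.2⁻¹, p.2 • x.snd⟩ := rfl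

instance IotaBiset.instMulAction {G Z : Type*} [Group G] [MulAction G Z] :
    MulAction (G × G) (IotaBiset G Z) where
  one_smul x := by
    cases x
    simp [IotaBiset.smul_def]
  mul_smul p q x := by
    cases x
    simp [IotaBiset.smul_def, mul_assoc, mul_smul]

instance IotaBiset.instFinite {G Z : Type*} [Finite G] [Finite Z] : Finite (IotaBiset G Z) :=
  Finite.of_equiv (G × Z) ⟨fun p => ⟨p.1, p.2⟩, fun x => (x.fst, x.snd), fun _ => rfl,
    fun _ => rfl⟩

end Iota

section Aux

theorem free_action_card_dvd {K Y : Type*} [Group K] [MulAction K Y] [Finite K] [Finite Y]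
    (h : ∀ (k : K) (y : Y), k • y = y → k = 1) : Nat.card K ∣ Nat.card Y := by
  classical
  have hstab : ∀ y : Y, MulAction.stabilizer K y = (⊥ : Subgroup K) := by
    intro y
    ext k
    simp only [MulAction.mem_stabilizer_iff, Subgroup.mem_bot]
    exact ⟨fun hk => h k y hk, fun hk => by simp [hk]⟩
  have eorb : ∀ y : Y, MulAction.orbit K y ≃ K := fun y =>
    (MulAction.orbitEquivQuotientStabilizer K y).trans
      ((Subgroup.quotientEquivOfEq (hstab y)).trans (QuotientGroup.quotientBot (G := K)).toEquiv)
  have e : Y ≃ (MulAction.orbitRel.Quotient K Y) × K :=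
    (MulAction.selfEquivSigmaOrbits K Y).trans
      ((Equiv.sigmaCongrRight fun ω => eorb ω.out).trans
        (Equiv.sigmaEquivProd (MulAction.orbitRel.Quotient K Y) K))
  rw [Nat.card_congr e, Nat.card_prod]
  exact Dvd.intro_left _ rfl

theorem aux_card_dvd {Γ K X : Type*} [Group Γ] [Group K] [MulAction Γ X] [Finite K] [Finite X]
    (f : K →* Γ) (Y : Set X)
    (hinv : ∀ (k : K), ∀ x ∈ Y, f k • x ∈ Y)
    (hfree : ∀ (k : K) (x : X), f k • x = x → k = 1) :
    Nat.card K ∣ Nat.card Y := by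
  letI : SMul K Y := ⟨fun k y => ⟨f k • (y : X), hinv k y y.2⟩⟩
  have smul_def : ∀ (k : K) (y : Y), ((k • y : Y) : X) = f k • (y : X) := fun _ _ => rfl
  letI : MulAction K Y :=
    { one_smul := fun y => Subtype.ext (by simp [smul_def])
      mul_smul := fun a b y => Subtype.ext (by simp [smul_def, mul_smul]) }
  exact free_action_card_dvd (fun k y hk => hfree k y (congrArg Subtype.val hk))

theorem mem_twistedDiagonal_iff {G H : Type*} [Group G] [Group H] (R : Subgroup G)
    (S : Subgroup H) (α : S ≃* R) (l : G × H) :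
    l ∈ twistedDiagonal R S α ↔ ∃ s : S, l = (((α s : R) : G), (s : H)) := by
  constructor
  · rintro ⟨s, rfl⟩
    exact ⟨s, rfl⟩
  · rintro ⟨s, rfl⟩
    exact ⟨s, rfl⟩

end Aux

/-- For a finite bifree `(G,H)`-biset `X` and a twisted diagonal subgroup
`L = Δ(R,α,S)`, the number of `L`-fixed points of `X` is divisible by `|C_G(R)|` and by
`|C_H(S)|`. -/
theorem statement1 {G H : Type*} [Group G] [Group H] [Finite G] [Finite H]
    (X : Type*) [MulAction (G × H) X] [Finite X] (hX : IsBifree G H X)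
    (R : Subgroup G) (S : Subgroup H) (α : S ≃* R) :
    Nat.card (Subgroup.centralizer (R : Set G)) ∣
        Nat.card (MulAction.fixedPoints (twistedDiagonal R S α) X) ∧
      Nat.card (Subgroup.centralizer (S : Set H)) ∣
        Nat.card (MulAction.fixedPoints (twistedDiagonal R S α) X) := by
  obtain ⟨hXl, hXr⟩ := hX
  constructor
  · refine aux_card_dvd
      ((MonoidHom.inl G H).comp (Subgroup.centralizer (R : Set G)).subtype)
      (MulAction.fixedPoints (twistedDiagonal R S α) X) ?_ ?_
    · intro k x hx l
      obtain ⟨s, hs⟩ := (mem_twistedDiagonal_iff R S α l).mp l.2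
      have hx' : (((α s : R) : G), (s : H)) • x = x := by
        have := hx l
        rwa [Subgroup.smul_def, hs] at this
      have hc : ((α s : R) : G) * (k : G) = (k : G) * ((α s : R) : G) :=
        (Subgroup.mem_centralizer_iff.mp k.2) _ (α s).2
      have hmul : ((((α s : R) : G), (s : H)) : G × H) * (((k : G), (1 : H)) : G × H)
          = (((k : G), (1 : H)) : G × H) * ((((α s : R) : G), (s : H)) : G × H) := by
        simp [Prod.ext_iff, hc]
      rw [Subgroup.smul_def, hs]
      show (((α s : R) : G), (s : H)) • ((k : G), (1 : H)) • x = ((k : G), (1 : H)) • x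
      rw [smul_smul, hmul, ← smul_smul, hx']
    · intro k x hk
      exact Subtype.ext (hXl (k : G) x hk)
  · refine aux_card_dvd
      ((MonoidHom.inr G H).comp (Subgroup.centralizer (S : Set H)).subtype)
      (MulAction.fixedPoints (twistedDiagonal R S α) X) ?_ ?_
    · intro k x hx l
      obtain ⟨s, hs⟩ := (mem_twistedDiagonal_iff R S α l).mp l.2
      have hx' : (((α s : R) : G), (s : H)) • x = x := by
        have := hx l
        rwa [Subgroup.smul_def, hs] at this
      have hc : (s : H) * (k : H) = (k : H) * (s : H) :=
        (Subgroup.mem_centralizer_iff.mp k.2) _ s.2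
      have hmul : ((((α s : R) : G), (s : H)) : G × H) * (((1 : G), (k : H)) : G × H)
          = (((1 : G), (k : H)) : G × H) * ((((α s : R) : G), (s : H)) : G × H) := by
        simp [Prod.ext_iff, hc]
      rw [Subgroup.smul_def, hs]
      show (((α s : R) : G), (s : H)) • ((1 : G), (k : H)) • x = ((1 : G), (k : H)) • x
      rw [smul_smul, hmul, ← smul_smul, hx']
    · intro k x hk
      exact Subtype.ext (hXr (k : H) x hk)
end

section
/- Let G and H be finite groups and let Δ(R,α,S) ≤ G×H be a twisted diagonal subgroup, where α : S → R is an isomorphism, S ≤ H, R ≤ G. Set N_α := {h ∈ N_H(S) : ∃ g ∈ N_G(R) with α∘c_h = c_g∘α on S} and N_{α⁻¹} := {g ∈ N_G(R) : ∃ h ∈ N_H(S) with α∘c_h = c_g∘α on S}. Then |N_{G×H}(Δ(R,α,S))| = |N_{α⁻¹}| · |C_H(S)| = |C_G(R)| · |N_α|. -/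
open MulAction

/-- `N_α = {h ∈ N_H(S) : ∃ g ∈ N_G(R), α ∘ c_h = c_g ∘ α on S}`. -/
def NsetAlpha {G H : Type*} [Group G] [Group H] (R : Subgroup G) (S : Subgroup H)
    (α : S ≃* R) : Set H :=
  {h | h ∈ Subgroup.normalizer (S : Set H) ∧ ∃ g ∈ Subgroup.normalizer (R : Set G),
    ∀ s t : S, (t : H) = h * (s : H) * h⁻¹ → (α t : G) = g * (α s : G) * g⁻¹}

/-- `N_{α⁻¹} = {g ∈ N_G(R) : ∃ h ∈ N_H(S), α ∘ c_h = c_g ∘ α on S}`. -/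
def NsetAlphaInv {G H : Type*} [Group G] [Group H] (R : Subgroup G) (S : Subgroup H)
    (α : S ≃* R) : Set G :=
  {g | g ∈ Subgroup.normalizer (R : Set G) ∧ ∃ h ∈ Subgroup.normalizer (S : Set H),
    ∀ s t : S, (t : H) = h * (s : H) * h⁻¹ → (α t : G) = g * (α s : G) * g⁻¹}

section Statement6Proof

variable {G H : Type*} [Group G] [Group H] {R : Subgroup G} {S : Subgroup H} (α : S ≃* R)

lemma mem_twistedDiagonal {x : G × H} :
    x ∈ twistedDiagonal R S α ↔ ∃ s : S, (α s : G) = x.1 ∧ (s : H) = x.2 := by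
  constructor
  · rintro ⟨s, rfl⟩
    exact ⟨s, rfl, rfl⟩
  · rintro ⟨s, h1, h2⟩
    exact ⟨s, Prod.ext h1 h2⟩

lemma normalizer_step {g : G} {h : H}
    (hn : (g, h) ∈ Subgroup.normalizer (twistedDiagonal R S α : Set (G × H))) (s : S) :
    ∃ t : S, (t : H) = h * (s : H) * h⁻¹ ∧ (α t : G) = g * (α s : G) * g⁻¹ := by
  have h1 : ((α s : G), (s : H)) ∈ twistedDiagonal R S α := ⟨s, rfl⟩
  have h2 := (Subgroup.mem_normalizer_iff.mp hn _).mp h1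
  obtain ⟨t, ht1, ht2⟩ := (mem_twistedDiagonal α).mp h2
  exact ⟨t, ht2, ht1⟩

lemma mem_normalizer_twistedDiagonal_iff {g : G} {h : H} :
    (g, h) ∈ Subgroup.normalizer (twistedDiagonal R S α : Set (G × H)) ↔
      h ∈ Subgroup.normalizer (S : Set H) ∧ g ∈ Subgroup.normalizer (R : Set G) ∧
        ∀ s t : S, (t : H) = h * (s : H) * h⁻¹ → (α t : G) = g * (α s : G) * g⁻¹ := by
  constructor
  · intro hn
    have hn' : (g⁻¹, h⁻¹) ∈ Subgroup.normalizer (twistedDiagonal R S α : Set (G × H)) := by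
      have := inv_mem hn
      simpa using this
    refine ⟨?_, ?_, ?_⟩
    · rw [Subgroup.mem_normalizer_iff]
      intro n
      constructor
      · intro hns
        obtain ⟨t, ht1, _⟩ := normalizer_step α hn ⟨n, hns⟩
        exact ht1 ▸ t.2
      · intro hns
        obtain ⟨t, ht1, _⟩ := normalizer_step α hn' ⟨h * n * h⁻¹, hns⟩
        have : (t : H) = n := by
          rw [ht1]; group
        exact this ▸ t.2
    · rw [Subgroup.mem_normalizer_iff]
      intro r
      constructor
      · intro hr
        obtain ⟨t, _, ht2⟩ := normalizer_step α hn (α.symm ⟨r, hr⟩)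
        rw [α.apply_symm_apply] at ht2
        exact ht2 ▸ (α t).2
      · intro hr
        obtain ⟨t, _, ht2⟩ := normalizer_step α hn' (α.symm ⟨g * r * g⁻¹, hr⟩)
        rw [α.apply_symm_apply] at ht2
        have : (α t : G) = r := by
          rw [ht2]; group
        exact this ▸ (α t).2
    · intro s t ht
      obtain ⟨t', ht1, ht2⟩ := normalizer_step α hn s
      have : t = t' := Subtype.ext (by rw [ht, ht1])
      rw [this]; exact ht2
  · rintro ⟨hS, hR, hκ⟩
    rw [Subgroup.mem_normalizer_iff]
    rintro ⟨a, b⟩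
    rw [mem_twistedDiagonal, mem_twistedDiagonal]
    constructor
    · rintro ⟨s, hs1, hs2⟩
      refine ⟨⟨h * (s : H) * h⁻¹, (Subgroup.mem_normalizer_iff.mp hS _).mp s.2⟩, ?_, ?_⟩
      · have := hκ s ⟨h * (s : H) * h⁻¹, (Subgroup.mem_normalizer_iff.mp hS _).mp s.2⟩ rfl
        simp only [this, hs1]
        rfl
      · simp only [hs2]
        rfl
    · rintro ⟨t, ht1, ht2⟩
      have hb : b ∈ S := by
        have : h * b * h⁻¹ ∈ S := by
          have : ((g, h) * (a, b) * (g, h)⁻¹).2 = h * b * h⁻¹ := rfl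
          rw [← this, ← ht2]; exact t.2
        exact (Subgroup.mem_normalizer_iff.mp hS b).mpr this
      refine ⟨⟨b, hb⟩, ?_, rfl⟩
      have hteq : (t : H) = h * ((⟨b, hb⟩ : S) : H) * h⁻¹ := ht2
      have := hκ ⟨b, hb⟩ t hteq
      have ha : (α t : G) = g * a * g⁻¹ := ht1
      rw [ha] at this
      exact mul_left_cancel (mul_right_cancel this.symm)

lemma card_eq_range_mul_ker {A B : Type*} [Group A] [Group B] [Finite A] (f : A →* B) :
    Nat.card A = Nat.card f.range * Nat.card f.ker := by
  rw [Subgroup.card_eq_card_quotient_mul_card_subgroup f.ker]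
  congr 1
  exact Nat.card_congr (QuotientGroup.quotientKerEquivRange f).toEquiv

end Statement6Proof

/-- `|N_{G×H}(Δ(R,α,S))| = |N_{α⁻¹}|·|C_H(S)| = |C_G(R)|·|N_α|`. -/
theorem statement6 {G H : Type*} [Group G] [Group H] [Finite G] [Finite H]
    (R : Subgroup G) (S : Subgroup H) (α : S ≃* R) :
    Nat.card (Subgroup.normalizer (twistedDiagonal R S α : Set (G × H))) =
        Nat.card (NsetAlphaInv R S α) * Nat.card (Subgroup.centralizer (S : Set H)) ∧
      Nat.card (Subgroup.normalizer (twistedDiagonal R S α : Set (G × H))) =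
        Nat.card (Subgroup.centralizer (R : Set G)) * Nat.card (NsetAlpha R S α) := by
  set N := Subgroup.normalizer (twistedDiagonal R S α : Set (G × H)) with hN
  -- centralizer elements normalize
  have hcentS : ∀ c ∈ Subgroup.centralizer (S : Set H), c ∈ Subgroup.normalizer (S : Set H) := by
    intro c hc
    rw [Subgroup.mem_normalizer_iff]
    intro n
    constructor
    · intro hn
      have hcomm := Subgroup.mem_centralizer_iff.mp hc n hn
      have : c * n * c⁻¹ = n := by rw [← hcomm]; group
      rwa [this]
    · intro hn
      have hcomm := Subgroup.mem_centralizer_iff.mp hc _ hn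
      have heq : n = c * n * c⁻¹ := by
        have h2 : c⁻¹ * (c * n * c⁻¹ * c) = c⁻¹ * (c * (c * n * c⁻¹)) := by rw [hcomm]
        calc n = c⁻¹ * (c * n * c⁻¹ * c) := by group
        _ = c⁻¹ * (c * (c * n * c⁻¹)) := h2
        _ = c * n * c⁻¹ := by group
      exact heq ▸ hn
  have hcentR : ∀ c ∈ Subgroup.centralizer (R : Set G), c ∈ Subgroup.normalizer (R : Set G) := by
    intro c hc
    rw [Subgroup.mem_normalizer_iff]
    intro n
    constructor
    · intro hn
      have hcomm := Subgroup.mem_centralizer_iff.mp hc n hn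
      have : c * n * c⁻¹ = n := by rw [← hcomm]; group
      rwa [this]
    · intro hn
      have hcomm := Subgroup.mem_centralizer_iff.mp hc _ hn
      have heq : n = c * n * c⁻¹ := by
        have h2 : c⁻¹ * (c * n * c⁻¹ * c) = c⁻¹ * (c * (c * n * c⁻¹)) := by rw [hcomm]
        calc n = c⁻¹ * (c * n * c⁻¹ * c) := by group
        _ = c⁻¹ * (c * (c * n * c⁻¹)) := h2
        _ = c * n * c⁻¹ := by group
      exact heq ▸ hn
  constructor
  · -- first equality, via projection to G
    let f : N →* G := (MonoidHom.fst G H).comp N.subtype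
    have hcard := card_eq_range_mul_ker f
    have hrange : Nat.card f.range = Nat.card (NsetAlphaInv R S α) := by
      apply Nat.card_congr
      apply Equiv.setCongr
      ext g
      constructor
      · rintro ⟨⟨⟨a, b⟩, hm⟩, rfl⟩
        obtain ⟨hS, hR, hκ⟩ := (mem_normalizer_twistedDiagonal_iff α).mp hm
        exact ⟨hR, b, hS, hκ⟩
      · rintro ⟨hR, h, hS, hκ⟩
        exact ⟨⟨(g, h), (mem_normalizer_twistedDiagonal_iff α).mpr ⟨hS, hR, hκ⟩⟩, rfl⟩
    have hker : Nat.card f.ker = Nat.card (Subgroup.centralizer (S : Set H)) := by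
      apply Nat.card_congr
      refine ⟨fun x => ⟨(x : N).1.2, ?_⟩, fun c => ⟨⟨(1, (c : H)), ?_⟩, ?_⟩, ?_, ?_⟩
      · obtain ⟨⟨⟨a, b⟩, hm⟩, hk⟩ := x
        have ha : a = 1 := hk
        subst ha
        obtain ⟨hS, _, hκ⟩ := (mem_normalizer_twistedDiagonal_iff α).mp hm
        rw [Subgroup.mem_centralizer_iff]
        intro n hn
        have htmem : b * n * b⁻¹ ∈ S := (Subgroup.mem_normalizer_iff.mp hS _).mp hn
        have := hκ ⟨n, hn⟩ ⟨b * n * b⁻¹, htmem⟩ rfl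
        simp only [one_mul, inv_one, mul_one] at this
        have : (⟨b * n * b⁻¹, htmem⟩ : S) = ⟨n, hn⟩ :=
          α.injective (Subtype.ext this)
        have hb : b * n * b⁻¹ = n := congrArg Subtype.val this
        calc n * b = (b * n * b⁻¹) * b := by rw [hb]
        _ = b * n := by group
      · refine (mem_normalizer_twistedDiagonal_iff α).mpr ⟨hcentS _ c.2, one_mem _, ?_⟩
        intro s t ht
        have hcs := Subgroup.mem_centralizer_iff.mp c.2 (s : H) s.2
        have : (t : H) = (s : H) := by
          rw [ht, ← hcs]; group
        have : t = s := Subtype.ext this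
        rw [this]
        group
      · rfl
      · intro x
        obtain ⟨⟨⟨a, b⟩, hm⟩, hk⟩ := x
        have ha : a = 1 := hk
        subst ha
        rfl
      · intro c
        rfl
    rw [hcard, hrange, hker]
  · -- second equality, via projection to H
    let f : N →* H := (MonoidHom.snd G H).comp N.subtype
    have hcard := card_eq_range_mul_ker f
    have hrange : Nat.card f.range = Nat.card (NsetAlpha R S α) := by
      apply Nat.card_congr
      apply Equiv.setCongr
      ext h
      constructor
      · rintro ⟨⟨⟨a, b⟩, hm⟩, rfl⟩
        obtain ⟨hS, hR, hκ⟩ := (mem_normalizer_twistedDiagonal_iff α).mp hm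
        exact ⟨hS, a, hR, hκ⟩
      · rintro ⟨hS, g, hR, hκ⟩
        exact ⟨⟨(g, h), (mem_normalizer_twistedDiagonal_iff α).mpr ⟨hS, hR, hκ⟩⟩, rfl⟩
    have hker : Nat.card f.ker = Nat.card (Subgroup.centralizer (R : Set G)) := by
      apply Nat.card_congr
      refine ⟨fun x => ⟨(x : N).1.1, ?_⟩, fun c => ⟨⟨((c : G), 1), ?_⟩, ?_⟩, ?_, ?_⟩
      · obtain ⟨⟨⟨a, b⟩, hm⟩, hk⟩ := x
        have hb : b = 1 := hk
        subst hb
        obtain ⟨_, hR, hκ⟩ := (mem_normalizer_twistedDiagonal_iff α).mp hm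
        rw [Subgroup.mem_centralizer_iff]
        intro n hn
        have := hκ (α.symm ⟨n, hn⟩) (α.symm ⟨n, hn⟩) (by group)
        rw [α.apply_symm_apply] at this
        calc n * a = (a * n * a⁻¹) * a := by rw [← this]
        _ = a * n := by group
      · refine (mem_normalizer_twistedDiagonal_iff α).mpr ⟨one_mem _, hcentR _ c.2, ?_⟩
        intro s t ht
        have : (t : H) = (s : H) := by rw [ht]; group
        have hts : t = s := Subtype.ext this
        have hcs := Subgroup.mem_centralizer_iff.mp c.2 ((α s : G)) (α s).2
        rw [hts, ← hcs]
        group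
      · rfl
      · intro x
        obtain ⟨⟨⟨a, b⟩, hm⟩, hk⟩ := x
        have hb : b = 1 := hk
        subst hb
        rfl
      · intro c
        rfl
    rw [hcard, hrange, hker, Nat.mul_comm]
end
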